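/- In the underlying undirected graph of G_1, every path from vertex 1 to vertex 9 that avoids the vertices 2, 5 and 8 must use the unique such path, and this path passes through all of the vertices 3, 4, 6, 7. Consequently, for any subgraph H of the bunkbed graph \overline{G_1} whose post set P(H) strictly contains \{2,5,8\}, every undirected path from 1^- to 9^- or 9^+ in H passes through a post. -/

import Mathlib

/-- Edges of the bunkbed graph of a directed graph on vertex type `V`:
`horiz u v ε` is the copy of the directed edge `(u,v)` in bunk `ε`
(`false` = lower bunk `-`, `true` = upper bunk `+`); `vert w` is the
bidirected vertical edge `(w⁻, w⁺)`. -/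
inductive BBEdge (V : Type) : Type
  | horiz : V → V → Bool → BBEdge V
  | vert  : V → BBEdge V
deriving DecidableEq

/-- The `F`-mirroring map on single edges: vertical edges are fixed, a horizontal
edge whose shadow lies in `F` is sent to its mirrored copy in the other bunk, and
horizontal edges with shadow outside `F` are fixed. -/
def mir {V : Type} [DecidableEq V] (F : Finset (V × V)) : BBEdge V → BBEdge V
  | .horiz u v ε => if (u, v) ∈ F then .horiz u v (!ε) else .horiz u v ε
  | .vert w => .vert w

/-- The `F`-mirrored subgraph `M(H,F)`. -/
def M {V : Type} [DecidableEq V] (H : Finset (BBEdge V)) (F : Finset (V × V)) :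
    Finset (BBEdge V) :=
  H.image (mir F)
/-- The edge set of the bunkbed graph of the directed graph with vertex set `Vs`
and edge set `E`: the vertical edges at all vertices together with the two
horizontal copies of each edge. -/
def bbEdges {V : Type} [DecidableEq V] (Vs : Finset V) (E : Finset (V × V)) :
    Finset (BBEdge V) :=
  Vs.image BBEdge.vert ∪ E.image (fun p => BBEdge.horiz p.1 p.2 false) ∪
    E.image (fun p => BBEdge.horiz p.1 p.2 true)

/-- One step of directed traversal in a subgraph `H` of the bunkbed graph:
horizontal edges are used in their direction within a bunk, and vertical edges
may be traversed in both directions. Vertices of the bunkbed graph are pairs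
`(w, ε)` with `ε : Bool` the bunk label (`false` = `-`, `true` = `+`). -/
def bbStep {V : Type} [DecidableEq V] (H : Finset (BBEdge V)) :
    V × Bool → V × Bool → Prop := fun a b =>
  (a.1 = b.1 ∧ a.2 ≠ b.2 ∧ BBEdge.vert a.1 ∈ H) ∨
    (a.2 = b.2 ∧ BBEdge.horiz a.1 b.1 a.2 ∈ H)

/-- Directed reachability `x → y` in a subgraph of the bunkbed graph. -/
def bbReach {V : Type} [DecidableEq V] (H : Finset (BBEdge V))
    (a b : V × Bool) : Prop :=
  Relation.ReflTransGen (bbStep H) a b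
/-- The conditioning event of the conditioned bunkbed model `𝓔_T`: all vertices
of `T` are posts. -/
def postCond {V : Type} [DecidableEq V] (T : Finset V)
    (H : Finset (BBEdge V)) : Prop :=
  ∀ t ∈ T, BBEdge.vert t ∈ H

/-- The edge set of the graph `G₁` of Przybyłowski's counterexample, on
vertices `1,…,9`. -/
def E1 : Finset (ℕ × ℕ) :=
  {(1,2), (1,4), (2,3), (3,4), (4,5), (3,7), (5,6), (6,7), (6,9), (7,8), (8,9)}

/-- The vertex set of `G₁`. -/
def V1 : Finset ℕ := {1, 2, 3, 4, 5, 6, 7, 8, 9}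

/-- The conditioning set `T = {2,5,8}`. -/
def T1 : Finset ℕ := {2, 5, 8}

/-- The edge set of the bunkbed graph of `G₁`. -/
def s1 : Finset (BBEdge ℕ) := bbEdges V1 E1


/-! ### Auxiliary machinery -/

/-- Position of a vertex along the unique avoiding path `1,4,3,7,6,9`. -/
def fS : ℕ → ℕ
  | 1 => 0 | 4 => 1 | 3 => 2 | 7 => 3 | 6 => 4 | 9 => 5 | _ => 7

/-- Inverse of `fS` on positions `0..5`. -/
def gS : ℕ → ℕ
  | 0 => 1 | 1 => 4 | 2 => 3 | 3 => 7 | 4 => 6 | 5 => 9 | _ => 0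

/-- Membership in `{1,3,4,6,7,9} = V1 \ T1`. -/
def inS (x : ℕ) : Prop := x = 1 ∨ x = 3 ∨ x = 4 ∨ x = 6 ∨ x = 7 ∨ x = 9

lemma edge_step (x y : ℕ) (h : (x,y) ∈ E1 ∨ (y,x) ∈ E1) (hx : x ∉ T1) (hy : y ∉ T1) :
    inS x ∧ inS y ∧ (fS y = fS x + 1 ∨ fS x = fS y + 1) := by
  simp [E1, T1, Prod.ext_iff] at h hx hy
  rcases h with (h|h) <;>
    rcases h with ⟨rfl,rfl⟩|⟨rfl,rfl⟩|⟨rfl,rfl⟩|⟨rfl,rfl⟩|⟨rfl,rfl⟩|⟨rfl,rfl⟩|⟨rfl,rfl⟩|⟨rfl,rfl⟩|⟨rfl,rfl⟩|⟨rfl,rfl⟩|⟨rfl,rfl⟩ <;>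
    simp_all [fS, inS]

lemma fS_inj {x y : ℕ} (hx : inS x) (hy : inS y) (h : fS x = fS y) : x = y := by
  rcases hx with rfl|rfl|rfl|rfl|rfl|rfl <;> rcases hy with rfl|rfl|rfl|rfl|rfl|rfl <;>
    simp_all [fS]

lemma gS_fS {x : ℕ} (hx : inS x) : gS (fS x) = x := by
  rcases hx with rfl|rfl|rfl|rfl|rfl|rfl <;> rfl

lemma fS_le_five {x : ℕ} (hx : inS x) : fS x ≤ 5 := by
  rcases hx with rfl|rfl|rfl|rfl|rfl|rfl <;> simp [fS]

lemma inS_of_V1 {w : ℕ} (hw : w ∈ V1) (hwT : w ∉ T1) : inS w := by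
  simp [V1] at hw
  simp [T1] at hwT
  rcases hw with rfl|rfl|rfl|rfl|rfl|rfl|rfl|rfl|rfl <;> simp_all [inS]

lemma chain_strengthen {α : Type*} {R : α → α → Prop} {P : α → Prop} :
    ∀ (l : List α), l.Chain' R → (∀ x ∈ l, P x) →
      l.Chain' (fun a b => R a b ∧ P a ∧ P b)
  | [], _, _ => List.isChain_nil
  | [a], _, _ => List.isChain_singleton a
  | a :: b :: t, h, hp => by
      simp only [List.Chain', List.isChain_cons_cons] at h ⊢
      exact ⟨⟨h.1, hp a (by simp), hp b (by simp)⟩,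
        chain_strengthen (b :: t) h.2 fun x hx => hp x (by simp [hx])⟩

lemma ivt : ∀ (l : List ℕ), l.Chain' (fun a b => b = a + 1 ∨ a = b + 1) →
    ∀ a b c, l.head? = some a → l.getLast? = some b → a ≤ c → c ≤ b → c ∈ l
  | [], _, a, b, c, ha, _, _, _ => by simp at ha
  | [x], _, a, b, c, ha, hb, h1, h2 => by
      simp at ha hb
      have : c = x := by omega
      simp [this]
  | x :: y :: t, h, a, b, c, ha, hb, h1, h2 => by
      simp at ha; subst ha
      simp only [List.Chain', List.isChain_cons_cons] at h
      rcases Nat.eq_or_lt_of_le h1 with rfl | hlt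
      · simp
      · have hb' : (y :: t).getLast? = some b := by
          rw [List.getLast?_cons_cons] at hb; exact hb
        have : c ∈ y :: t := by
          apply ivt (y :: t) h.2 y b c rfl hb' _ h2
          rcases h.1 with h'|h' <;> omega
        simp [this]

lemma ivt' : ∀ (l : List ℕ), l.Chain' (fun a b => b = a + 1 ∨ a = b + 1) →
    ∀ a b c, l.head? = some a → l.getLast? = some b → b ≤ c → c ≤ a → c ∈ l
  | [], _, a, b, c, ha, _, _, _ => by simp at ha
  | [x], _, a, b, c, ha, hb, h1, h2 => by
      simp at ha hb
      have : c = x := by omega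
      simp [this]
  | x :: y :: t, h, a, b, c, ha, hb, h1, h2 => by
      simp at ha; subst ha
      simp only [List.Chain', List.isChain_cons_cons] at h
      rcases Nat.eq_or_lt_of_le h2 with rfl | hlt
      · simp
      · have hb' : (y :: t).getLast? = some b := by
          rw [List.getLast?_cons_cons] at hb; exact hb
        have : c ∈ y :: t := by
          apply ivt' (y :: t) h.2 y b c rfl hb' h1 _
          rcases h.1 with h'|h' <;> omega
        simp [this]

lemma mono_chain : ∀ (l : List ℕ), l.Chain' (fun a b => b = a + 1 ∨ a = b + 1) →
    l.Nodup → ∀ a b, l.head? = some a → l.getLast? = some b → a ≤ b →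
    l = List.range' a (b + 1 - a)
  | [], _, _, a, b, ha, _, _ => by simp at ha
  | [x], _, _, a, b, ha, hb, hab => by
      simp at ha hb; subst ha; subst hb
      have : x + 1 - x = 1 := by omega
      rw [this]; rfl
  | x :: y :: t, h, hnd, a, b, ha, hb, hab => by
      simp at ha; subst ha
      simp only [List.Chain', List.isChain_cons_cons] at h
      have hb' : (y :: t).getLast? = some b := by
        rw [List.getLast?_cons_cons] at hb; exact hb
      have hxnot : x ∉ y :: t := by
        rw [List.nodup_cons] at hnd; exact hnd.1
      rcases h.1 with hup | hdown
      · subst hup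
        have hxb : x + 1 ≤ b := by
          by_contra hc
          exact hxnot (ivt' ((x+1) :: t) h.2 (x+1) b x rfl hb' (by omega) (by omega))
        have := mono_chain ((x+1) :: t) h.2 (List.Nodup.of_cons hnd) (x+1) b rfl hb' hxb
        rw [this]
        have h6 : b + 1 - x = (b + 1 - (x+1)) + 1 := by omega
        rw [h6, List.range'_succ]
      · exfalso
        exact hxnot (ivt (y :: t) h.2 y b x rfl hb' (by omega) hab)

lemma all_inS {R : ℕ → ℕ → Prop} (hR : ∀ x y, R x y → inS x → inS y) :
    ∀ (l : List ℕ), l.Chain' R → ∀ a, l.head? = some a → inS a → ∀ x ∈ l, inS x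
  | [], _, a, ha, _, x, hx => by simp at hx
  | [y], _, a, ha, hins, x, hx => by
      simp at ha hx; subst ha; subst hx; exact hins
  | y :: z :: t, h, a, ha, hins, x, hx => by
      simp at ha; subst ha
      simp only [List.Chain', List.isChain_cons_cons] at h
      rcases List.mem_cons.mp hx with rfl | hx
      · exact hins
      · exact all_inS hR (z :: t) h.2 z rfl (hR _ _ h.1 hins) x hx

lemma horiz_mem_s1 {u v : ℕ} {e : Bool} (h : BBEdge.horiz u v e ∈ s1) : (u,v) ∈ E1 := by
  simp only [s1, bbEdges, Finset.mem_union, Finset.mem_image] at h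
  rcases h with (⟨x, _, hx⟩ | ⟨p, hp, hpe⟩) | ⟨p, hp, hpe⟩
  · exact absurd hx (by simp)
  · obtain ⟨rfl, rfl, _⟩ : p.1 = u ∧ p.2 = v ∧ false = e := by
      simpa using hpe
    simpa using hp
  · obtain ⟨rfl, rfl, _⟩ : p.1 = u ∧ p.2 = v ∧ true = e := by
      simpa using hpe
    simpa using hp

lemma vert_mem_s1 {w : ℕ} (h : BBEdge.vert w ∈ s1) : w ∈ V1 := by
  simp only [s1, bbEdges, Finset.mem_union, Finset.mem_image] at h
  rcases h with (⟨x, hx, hxe⟩ | ⟨p, _, hpe⟩) | ⟨p, _, hpe⟩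
  · obtain rfl : x = w := by simpa using hxe
    exact hx
  · exact absurd hpe (by simp)
  · exact absurd hpe (by simp)

/-- Main engine: any ``walk'' (chain, repetitions allowed) from `1` to `9` in the
underlying graph of `G₁` avoiding `T1` visits every vertex of `S`. -/
lemma walk_visits {l : List ℕ}
    (hch : l.Chain' (fun x y => (x, y) ∈ E1 ∨ (y, x) ∈ E1))
    (hhd : l.head? = some 1) (hlast : l.getLast? = some 9)
    (havoid : ∀ x ∈ l, x ∉ T1) {w : ℕ} (hw : inS w) : w ∈ l := by
  have hch' := chain_strengthen l hch havoid
  have hS : ∀ x ∈ l, inS x :=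
    all_inS (fun x y h _ => (edge_step x y h.1 h.2.1 h.2.2).2.1) l hch' 1 hhd
      (by simp [inS])
  have hstep : l.Chain' (fun a b => fS b = fS a + 1 ∨ fS a = fS b + 1) :=
    hch'.imp (fun {a b} h => (edge_step a b h.1 h.2.1 h.2.2).2.2)
  have hmap : (l.map fS).Chain' (fun a b => b = a + 1 ∨ a = b + 1) :=
    (List.isChain_map fS).mpr hstep
  have hh : (l.map fS).head? = some 0 := by
    rw [List.head?_map, hhd]; rfl
  have hl : (l.map fS).getLast? = some 5 := by
    rw [List.getLast?_map, hlast]; rfl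
  have hmem := ivt (l.map fS) hmap 0 5 (fS w) hh hl (Nat.zero_le _) (fS_le_five hw)
  obtain ⟨x, hxl, hx⟩ := List.mem_map.mp hmem
  have : x = w := fS_inj (hS x hxl) hw hx
  exact this ▸ hxl

/-- First conjunct: in the underlying undirected graph of `G₁`, every
path from `1` to `9` avoiding the vertices `2, 5, 8` is the unique such path
`1,4,3,7,6,9`, which passes through all of `3, 4, 6, 7`. Second conjunct:
consequently, for any subgraph `H` of the bunkbed graph of `G₁` whose post set
strictly contains `{2,5,8}`, every undirected path (indeed walk) in `H` from `1⁻`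
to `9⁻` or `9⁺` passes through a post. -/

theorem unique_avoiding_path_and_posts_cut :
    (∀ l : List ℕ,
      l.Chain' (fun x y => (x, y) ∈ E1 ∨ (y, x) ∈ E1) →
      l.head? = some 1 → l.getLast? = some 9 → l.Nodup →
      (∀ x ∈ l, x ∉ T1) → l = [1, 4, 3, 7, 6, 9]) ∧
    (∀ H : Finset (BBEdge ℕ), H ⊆ s1 → postCond T1 H →
      (∃ w : ℕ, w ∉ T1 ∧ BBEdge.vert w ∈ H) →
      ∀ (ε : Bool) (l : List (ℕ × Bool)),
        l.Chain' (fun a b => bbStep H a b ∨ bbStep H b a) →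
        l.head? = some (1, false) → l.getLast? = some (9, ε) →
        ∃ a ∈ l, BBEdge.vert a.1 ∈ H) := by
  constructor
  · intro l hch hhd hlast hnd havoid
    have hch' := chain_strengthen l hch havoid
    have hS : ∀ x ∈ l, inS x :=
      all_inS (fun x y h _ => (edge_step x y h.1 h.2.1 h.2.2).2.1) l hch' 1 hhd
        (by simp [inS])
    have hstep : l.Chain' (fun a b => fS b = fS a + 1 ∨ fS a = fS b + 1) :=
      hch'.imp (fun {a b} h => (edge_step a b h.1 h.2.1 h.2.2).2.2)
    have hmap : (l.map fS).Chain' (fun a b => b = a + 1 ∨ a = b + 1) :=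
      (List.isChain_map fS).mpr hstep
    have hndm : (l.map fS).Nodup :=
      List.Nodup.map_on (fun x hx y hy h => fS_inj (hS x hx) (hS y hy) h) hnd
    have hh : (l.map fS).head? = some 0 := by
      rw [List.head?_map, hhd]; rfl
    have hl : (l.map fS).getLast? = some 5 := by
      rw [List.getLast?_map, hlast]; rfl
    have hmono := mono_chain (l.map fS) hmap hndm 0 5 hh hl (by omega)
    have hgf : ∀ a ∈ l, gS (fS a) = id a := fun a ha => gS_fS (hS a ha)
    calc l = l.map (fun a => gS (fS a)) := by
              rw [List.map_congr_left hgf, List.map_id]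
      _ = (l.map fS).map gS := by rw [List.map_map]; rfl
      _ = [1, 4, 3, 7, 6, 9] := by rw [hmono]; decide
  · rintro H hsub hpost ⟨w, hwT, hwH⟩ ε l hch hhd hlast
    by_contra hcon
    push_neg at hcon
    have hnT : ∀ a ∈ l, a.1 ∉ T1 := fun a ha ht => hcon a ha (hpost a.1 ht)
    have hch' := chain_strengthen l hch hcon
    have hsh : l.Chain' (fun a b : ℕ × Bool => (a.1, b.1) ∈ E1 ∨ (b.1, a.1) ∈ E1) := by
      refine hch'.imp (fun {a b} h => ?_)
      rcases h with ⟨hs | hs, hpa, hpb⟩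
      · rcases hs with ⟨_, _, hv⟩ | ⟨_, hh⟩
        · exact absurd hv hpa
        · exact Or.inl (horiz_mem_s1 (hsub hh))
      · rcases hs with ⟨_, _, hv⟩ | ⟨_, hh⟩
        · exact absurd hv hpb
        · exact Or.inr (horiz_mem_s1 (hsub hh))
    have hshm : (l.map Prod.fst).Chain' (fun x y => (x, y) ∈ E1 ∨ (y, x) ∈ E1) :=
      (List.isChain_map Prod.fst).mpr hsh
    have hhd' : (l.map Prod.fst).head? = some 1 := by
      rw [List.head?_map, hhd]; rfl
    have hlast' : (l.map Prod.fst).getLast? = some 9 := by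
      rw [List.getLast?_map, hlast]; rfl
    have havoid : ∀ x ∈ l.map Prod.fst, x ∉ T1 := by
      intro x hx
      obtain ⟨a, ha, rfl⟩ := List.mem_map.mp hx
      exact hnT a ha
    have hwS : inS w := inS_of_V1 (vert_mem_s1 (hsub hwH)) hwT
    have hwmem := walk_visits hshm hhd' hlast' havoid hwS
    obtain ⟨a, ha, rfl⟩ := List.mem_map.mp hwmem
    exact hcon a ha hwH
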